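/- arXiv:2503.01536 — 4 statements merged into one kernel-verified Lean document; each statement's English description precedes it below -/
import Mathlib

section
/- (Theorem 1(a)) For every tautology-free CNF formula φ and every partial truth assignment μ over its atoms: μ entails φ (every total assignment extending μ satisfies φ) if and only if μ validates φ (the residual φ|μ equals the constant ⊤). -/
/-- Propositional formulas over atoms of type `α`, built from the constants
`⊤` (`tr`) and `⊥` (`fls`), atoms, negation, conjunction, disjunction,
implication and bi-implication. -/
inductive PForm (α : Type) : Type
  | tr : PForm α
  | fls : PForm α
  | atom : α → PForm α
  | neg : PForm α → PForm α
  | conj : PForm α → PForm α → PForm α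
  | disj : PForm α → PForm α → PForm α
  | impl : PForm α → PForm α → PForm α
  | biimp : PForm α → PForm α → PForm α

namespace PForm

variable {α : Type}

/-- Standard two-valued evaluation under a total truth assignment. -/
def eval (η : α → Bool) : PForm α → Bool
  | tr => true
  | fls => false
  | atom a => η a
  | neg φ => !(eval η φ)
  | conj φ ψ => eval η φ && eval η ψ
  | disj φ ψ => eval η φ || eval η ψ
  | impl φ ψ => !(eval η φ) || eval η ψ
  | biimp φ ψ => eval η φ == eval η ψ

/-- Simplifying negation: `¬⊤ ⇒ ⊥`, `¬⊥ ⇒ ⊤`. -/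
def snot : PForm α → PForm α
  | tr => fls
  | fls => tr
  | φ => neg φ

/-- Simplifying conjunction: `⊤∧φ, φ∧⊤ ⇒ φ`; `⊥∧φ, φ∧⊥ ⇒ ⊥`. -/
def sand : PForm α → PForm α → PForm α
  | tr, ψ => ψ
  | fls, _ => fls
  | φ, tr => φ
  | _, fls => fls
  | φ, ψ => conj φ ψ

/-- Simplifying disjunction: `⊤∨φ, φ∨⊤ ⇒ ⊤`; `⊥∨φ, φ∨⊥ ⇒ φ`. -/
def sor : PForm α → PForm α → PForm α
  | tr, _ => tr
  | fls, ψ => ψ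
  | _, tr => tr
  | φ, fls => φ
  | φ, ψ => disj φ ψ

/-- Simplifying implication: `⊤→φ ⇒ φ`; `⊥→φ ⇒ ⊤`; `φ→⊤ ⇒ ⊤`; `φ→⊥ ⇒ ¬φ`. -/
def simpImp : PForm α → PForm α → PForm α
  | tr, ψ => ψ
  | fls, _ => tr
  | _, tr => tr
  | φ, fls => snot φ
  | φ, ψ => impl φ ψ

/-- Simplifying bi-implication: `⊤↔φ, φ↔⊤ ⇒ φ`; `⊥↔φ, φ↔⊥ ⇒ ¬φ`. -/
def sIff : PForm α → PForm α → PForm α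
  | tr, ψ => ψ
  | fls, ψ => snot ψ
  | φ, tr => φ
  | φ, fls => snot φ
  | φ, ψ => biimp φ ψ

/-- The residual `φ|μ` of `φ` under a partial assignment
`μ : α → Option Bool`: substitute each assigned atom with the corresponding
constant and simplify recursively through the connectives. -/
def residual (μ : α → Option Bool) : PForm α → PForm α
  | tr => tr
  | fls => fls
  | atom a =>
      match μ a with
      | some true => tr
      | some false => fls
      | none => atom a
  | neg φ => snot (residual μ φ)
  | conj φ ψ => sand (residual μ φ) (residual μ ψ)
  | disj φ ψ => sor (residual μ φ) (residual μ ψ)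
  | impl φ ψ => simpImp (residual μ φ) (residual μ ψ)
  | biimp φ ψ => sIff (residual μ φ) (residual μ ψ)

/-- Strong Kleene negation on three-valued `Option Bool` (`none` = unknown). -/
def kneg : Option Bool → Option Bool
  | some b => some (!b)
  | none => none

/-- Strong Kleene conjunction. -/
def kand : Option Bool → Option Bool → Option Bool
  | some false, _ => some false
  | _, some false => some false
  | some true, some true => some true
  | _, _ => none

/-- Strong Kleene disjunction. -/
def kor : Option Bool → Option Bool → Option Bool
  | some true, _ => some true
  | _, some true => some true
  | some false, some false => some false
  | _, _ => none

/-- Strong Kleene bi-implication. -/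
def kiff : Option Bool → Option Bool → Option Bool
  | some a, some b => some (a == b)
  | _, _ => none

/-- Three-valued (strong Kleene) evaluation of a formula under a partial
assignment: assigned atoms get their value, unassigned atoms get `none`. -/
def keval (μ : α → Option Bool) : PForm α → Option Bool
  | tr => some true
  | fls => some false
  | atom a => μ a
  | neg φ => kneg (keval μ φ)
  | conj φ ψ => kand (keval μ φ) (keval μ ψ)
  | disj φ ψ => kor (keval μ φ) (keval μ ψ)
  | impl φ ψ => kor (kneg (keval μ φ)) (keval μ ψ)
  | biimp φ ψ => kiff (keval μ φ) (keval μ ψ)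

/-- The set of atoms occurring in a formula. -/
def atoms : PForm α → Set α
  | tr => ∅
  | fls => ∅
  | atom a => {a}
  | neg φ => atoms φ
  | conj φ ψ => atoms φ ∪ atoms ψ
  | disj φ ψ => atoms φ ∪ atoms ψ
  | impl φ ψ => atoms φ ∪ atoms ψ
  | biimp φ ψ => atoms φ ∪ atoms ψ

/-- The formula corresponding to a literal `(a, polarity)`. -/
def litForm (l : α × Bool) : PForm α :=
  if l.2 then atom l.1 else neg (atom l.1)

/-- The disjunction of a finite list of literals (a clause);
the empty clause is `⊥`. -/
def clauseForm (c : List (α × Bool)) : PForm α :=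
  c.foldr (fun l acc => disj (litForm l) acc) fls

/-- The conjunction of a finite list of clauses (a CNF formula);
the empty CNF is `⊤`. -/
def cnfForm (Γ : List (List (α × Bool))) : PForm α :=
  Γ.foldr (fun c acc => conj (clauseForm c) acc) tr

/-- The cube `⋀μ`: the conjunction of the literals made true by the
partial assignment `μ`. -/
noncomputable def cube [Fintype α] (μ : α → Option Bool) : PForm α :=
  ((Finset.univ : Finset α).toList.filterMap
    (fun a => (μ a).map (fun b => if b then atom a else neg (atom a)))).foldr conj tr

end PForm

/-- A total assignment `η` extends the partial assignment `μ`. -/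
def ExtendsT {α : Type} (μ : α → Option Bool) (η : α → Bool) : Prop :=
  ∀ a b, μ a = some b → η a = b

/-- A partial assignment `μ'` extends the partial assignment `μ`. -/
def ExtendsP {α : Type} (μ μ' : α → Option Bool) : Prop :=
  ∀ a b, μ a = some b → μ' a = some b

/-- `μ` entails `φ`: every total assignment extending `μ` satisfies `φ`. -/
def Entails {α : Type} (μ : α → Option Bool) (φ : PForm α) : Prop :=
  ∀ η : α → Bool, ExtendsT μ η → PForm.eval η φ = true

section Shannon

variable {A B : Type}

/-- Combine total assignments on `A` and on `B` into one on `A ⊕ B`. -/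
def combine (η : A → Bool) (δ : B → Bool) : A ⊕ B → Bool :=
  Sum.elim η δ

/-- View a total assignment on `B` as a partial assignment on `A ⊕ B`. -/
def liftB (δ : B → Bool) : A ⊕ B → Option Bool :=
  Sum.elim (fun _ => none) (fun b => some (δ b))

/-- View a partial assignment on `A` as a partial assignment on `A ⊕ B`. -/
def liftA (μ : A → Option Bool) : A ⊕ B → Option Bool :=
  Sum.elim μ (fun _ => none)

/-- Combine a partial assignment on `A` with a total assignment on `B`. -/
def pcombine (μ : A → Option Bool) (δ : B → Bool) : A ⊕ B → Option Bool :=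
  Sum.elim μ (fun b => some (δ b))

/-- The Shannon expansion of `ψ` with respect to the (finite) atoms `B`:
the disjunction, over all total assignments `δ` on `B`, of the residuals
`ψ|δ`; it contains no atoms of `B`. -/
noncomputable def shannon [Fintype B] [DecidableEq B] (ψ : PForm (A ⊕ B)) : PForm (A ⊕ B) :=
  ((Finset.univ : Finset (B → Bool)).toList.map
    (fun δ => PForm.residual (liftB δ) ψ)).foldr PForm.disj PForm.fls

end Shannon

namespace CnfAux

open PForm

variable {α : Type}

lemma eval_snot (η : α → Bool) (φ : PForm α) : eval η (snot φ) = !(eval η φ) := by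
  cases φ <;> simp [snot, eval]

lemma eval_sand (η : α → Bool) (φ ψ : PForm α) :
    eval η (sand φ ψ) = (eval η φ && eval η ψ) := by
  cases φ <;> cases ψ <;> simp [sand, eval]

lemma eval_sor (η : α → Bool) (φ ψ : PForm α) :
    eval η (sor φ ψ) = (eval η φ || eval η ψ) := by
  cases φ <;> cases ψ <;> simp [sor, eval]

lemma eval_simpImp (η : α → Bool) (φ ψ : PForm α) :
    eval η (simpImp φ ψ) = (!(eval η φ) || eval η ψ) := by
  cases φ <;> cases ψ <;> simp [simpImp, eval, eval_snot]

lemma eval_sIff (η : α → Bool) (φ ψ : PForm α) :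
    eval η (sIff φ ψ) = (eval η φ == eval η ψ) := by
  cases φ <;> cases ψ <;> simp [sIff, eval, eval_snot] <;>
    cases eval η ‹PForm α› <;> simp

lemma eval_residual (μ : α → Option Bool) (η : α → Bool) (h : ExtendsT μ η)
    (φ : PForm α) : eval η (residual μ φ) = eval η φ := by
  induction φ with
  | tr => rfl
  | fls => rfl
  | atom a =>
      simp only [PForm.residual]
      cases hμ : μ a with
      | none => rfl
      | some b =>
          have := h a b hμ
          cases b <;> simp [eval, this]
  | neg φ ih => simp [PForm.residual, eval_snot, eval, ih]
  | conj φ ψ ih1 ih2 => simp [PForm.residual, eval_sand, eval, ih1, ih2]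
  | disj φ ψ ih1 ih2 => simp [PForm.residual, eval_sor, eval, ih1, ih2]
  | impl φ ψ ih1 ih2 => simp [PForm.residual, eval_simpImp, eval, ih1, ih2]
  | biimp φ ψ ih1 ih2 => simp [PForm.residual, eval_sIff, eval, ih1, ih2]

lemma sor_eq_tr_iff (φ ψ : PForm α) : sor φ ψ = tr ↔ φ = tr ∨ ψ = tr := by
  cases φ <;> cases ψ <;> simp [sor]

lemma sand_eq_tr_iff (φ ψ : PForm α) : sand φ ψ = tr ↔ φ = tr ∧ ψ = tr := by
  cases φ <;> cases ψ <;> simp [sand]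

lemma res_cnf_ne (μ : α → Option Bool) (Γ : List (List (α × Bool)))
    (h : residual μ (cnfForm Γ) ≠ tr) :
    ∃ c ∈ Γ, residual μ (clauseForm c) ≠ tr := by
  induction Γ with
  | nil => exact absurd rfl h
  | cons c Γ ih =>
      have h' : residual μ (cnfForm (c :: Γ)) =
          sand (residual μ (clauseForm c)) (residual μ (cnfForm Γ)) := rfl
      rw [h'] at h
      by_cases hc : residual μ (clauseForm c) = tr
      · obtain ⟨d, hd, hdn⟩ := ih (fun ht => h ((sand_eq_tr_iff _ _).2 ⟨hc, ht⟩))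
        exact ⟨d, List.mem_cons_of_mem _ hd, hdn⟩
      · exact ⟨c, List.mem_cons_self, hc⟩

lemma res_clause_ne (μ : α → Option Bool) (c : List (α × Bool))
    (h : residual μ (clauseForm c) ≠ tr) :
    ∀ l ∈ c, residual μ (litForm l) ≠ tr := by
  induction c with
  | nil => intro l hl; cases hl
  | cons l t ih =>
      have h' : residual μ (clauseForm (l :: t)) =
          sor (residual μ (litForm l)) (residual μ (clauseForm t)) := rfl
      rw [h'] at h
      intro l' hl'
      rcases List.mem_cons.1 hl' with rfl | hl'
      · exact fun ht => h ((sor_eq_tr_iff _ _).2 (Or.inl ht))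
      · exact ih (fun ht => h ((sor_eq_tr_iff _ _).2 (Or.inr ht))) l' hl'

lemma res_lit_ne (μ : α → Option Bool) (a : α) (p : Bool)
    (h : residual μ (litForm (a, p)) ≠ tr) : μ a ≠ some p := by
  intro heq
  apply h
  cases p <;> simp [litForm, PForm.residual, heq, snot]

lemma clause_false (η : α → Bool) (c : List (α × Bool))
    (h : ∀ l ∈ c, eval η (litForm l) = false) :
    eval η (clauseForm c) = false := by
  induction c with
  | nil => rfl
  | cons l t ih =>
      have h' : clauseForm (l :: t) = PForm.disj (litForm l) (clauseForm t) := rfl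
      rw [h']
      simp only [eval, Bool.or_eq_false_iff]
      exact ⟨h l List.mem_cons_self, ih fun l' hl' => h l' (List.mem_cons_of_mem _ hl')⟩

lemma cnf_false (η : α → Bool) (Γ : List (List (α × Bool))) (c : List (α × Bool))
    (hc : c ∈ Γ) (h : eval η (clauseForm c) = false) :
    eval η (cnfForm Γ) = false := by
  induction Γ with
  | nil => cases hc
  | cons d Γ ih =>
      have h' : cnfForm (d :: Γ) = PForm.conj (clauseForm d) (cnfForm Γ) := rfl
      rw [h']
      simp only [eval, Bool.and_eq_false_iff]
      rcases List.mem_cons.1 hc with rfl | hc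
      · exact Or.inl h
      · exact Or.inr (ih hc)

end CnfAux

/-- Theorem 1(a): For every tautology-free CNF formula `φ` and
every partial assignment `μ`: `μ` entails `φ` (every total assignment extending
`μ` satisfies `φ`) iff `μ` validates `φ` (the residual `φ|μ` equals `⊤`). -/
theorem cnf_entails_iff_validates {α : Type} (Γ : List (List (α × Bool)))
    (htf : ∀ c ∈ Γ, ¬ ∃ a, (a, true) ∈ c ∧ (a, false) ∈ c)
    (μ : α → Option Bool) :
    Entails μ (PForm.cnfForm Γ) ↔ PForm.residual μ (PForm.cnfForm Γ) = PForm.tr := by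
  classical
  constructor
  · intro hent
    by_contra hne
    obtain ⟨c, hc, hcn⟩ := CnfAux.res_cnf_ne μ Γ hne
    set η : α → Bool :=
      fun a => (μ a).getD (if (a, false) ∈ c then true else false) with hη
    have hext : ExtendsT μ η := by
      intro a b hb
      simp [hη, hb]
    have hlit : ∀ l ∈ c, PForm.eval η (PForm.litForm l) = false := by
      rintro ⟨a, p⟩ hl
      have hne' := CnfAux.res_lit_ne μ a p (CnfAux.res_clause_ne μ c hcn _ hl)
      cases hμa : μ a with
      | some b =>
          have hb : b ≠ p := fun h => hne' (h ▸ hμa)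
          have hηa : η a = b := by simp [hη, hμa]
          cases p <;> cases b <;> simp_all [PForm.litForm, PForm.eval]
      | none =>
          have hηa : η a = if (a, false) ∈ c then true else false := by
            simp [hη, hμa]
          cases p with
          | true =>
              have hnf : (a, false) ∉ c := fun hf => htf c hc ⟨a, hl, hf⟩
              simp [PForm.litForm, PForm.eval, hηa, hnf]
          | false =>
              simp [PForm.litForm, PForm.eval, hηa, hl]
    have := hent η hext
    rw [CnfAux.cnf_false η Γ c hc (CnfAux.clause_false η c hlit)] at this
    exact Bool.false_ne_true this
  · intro hres η hext
    have := CnfAux.eval_residual μ η hext (PForm.cnfForm Γ)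
    rw [hres] at this
    exact this.symm
end

section
/- (Theorem 2, uniqueness of entailment) Let R be any relation between partial truth assignments and propositional formulas such that: (a) whenever R(μ, φ) holds, μ entails φ; (b) for every assignment η that is total on the atoms of φ, R(η, φ) holds iff η satisfies φ; (c) whenever R(μ, φ₁ ∧ φ₂) holds, both R(μ, φ₁) and R(μ, φ₂) hold; and (d) if φ₁ and φ₂ are logically equivalent, then R(μ, φ₁) holds iff R(μ, φ₂) holds. Then for every partial truth assignment μ and every formula φ, R(μ, φ) holds if and only if μ entails φ. -/
namespace PForm

variable {α : Type}

/-- Override a total assignment by a partial one. -/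
def ov (ν : α → Option Bool) (η : α → Bool) : α → Bool := fun a => (ν a).getD (η a)

lemma eval_snot (η : α → Bool) (φ : PForm α) : eval η (snot φ) = !(eval η φ) := by
  cases φ <;> simp [snot, eval]

lemma eval_sand (η : α → Bool) (φ ψ : PForm α) :
    eval η (sand φ ψ) = (eval η φ && eval η ψ) := by
  cases φ <;> cases ψ <;> simp [sand, eval]

lemma eval_sor (η : α → Bool) (φ ψ : PForm α) :
    eval η (sor φ ψ) = (eval η φ || eval η ψ) := by
  cases φ <;> cases ψ <;> simp [sor, eval]

lemma eval_simpImp (η : α → Bool) (φ ψ : PForm α) :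
    eval η (simpImp φ ψ) = (!(eval η φ) || eval η ψ) := by
  cases φ <;> cases ψ <;> simp [simpImp, eval, eval_snot]

lemma eval_sIff (η : α → Bool) (φ ψ : PForm α) :
    eval η (sIff φ ψ) = (eval η φ == eval η ψ) := by
  cases φ <;> cases ψ <;> simp [sIff, eval, eval_snot]

lemma eval_residual (η : α → Bool) (ν : α → Option Bool) (φ : PForm α) :
    eval η (residual ν φ) = eval (ov ν η) φ := by
  induction φ with
  | tr => rfl
  | fls => rfl
  | atom a =>
      simp only [residual, eval, ov]
      rcases h : ν a with _ | b
      · simp [eval]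
      · cases b <;> simp [eval]
  | neg φ ih => simp [residual, eval, eval_snot, ih]
  | conj φ ψ ih1 ih2 => simp [residual, eval, eval_sand, ih1, ih2]
  | disj φ ψ ih1 ih2 => simp [residual, eval, eval_sor, ih1, ih2]
  | impl φ ψ ih1 ih2 => simp [residual, eval, eval_simpImp, ih1, ih2]
  | biimp φ ψ ih1 ih2 => simp [residual, eval, eval_sIff, ih1, ih2]

lemma atoms_snot (φ : PForm α) : atoms (snot φ) ⊆ atoms φ := by
  cases φ <;> simp [snot, atoms] <;> exact Set.Subset.rfl

lemma atoms_sand (φ ψ : PForm α) : atoms (sand φ ψ) ⊆ atoms φ ∪ atoms ψ := by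
  cases φ <;> cases ψ <;> simp [sand, atoms] <;>
    first
      | exact Set.subset_union_left
      | exact Set.subset_union_right
      | exact Set.Subset.rfl

lemma atoms_sor (φ ψ : PForm α) : atoms (sor φ ψ) ⊆ atoms φ ∪ atoms ψ := by
  cases φ <;> cases ψ <;> simp [sor, atoms] <;>
    first
      | exact Set.subset_union_left
      | exact Set.subset_union_right
      | exact Set.Subset.rfl

lemma atoms_simpImp (φ ψ : PForm α) : atoms (simpImp φ ψ) ⊆ atoms φ ∪ atoms ψ := by
  cases φ <;> cases ψ <;>
    simp only [simpImp, atoms] <;>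
    first
      | exact Set.subset_union_left
      | exact Set.subset_union_right
      | exact Set.Subset.rfl
      | exact (atoms_snot _).trans Set.subset_union_left
      | simp [atoms]

lemma atoms_sIff (φ ψ : PForm α) : atoms (sIff φ ψ) ⊆ atoms φ ∪ atoms ψ := by
  cases φ <;> cases ψ <;>
    simp only [sIff, atoms] <;>
    first
      | exact Set.subset_union_left
      | exact Set.subset_union_right
      | exact Set.Subset.rfl
      | exact (atoms_snot _).trans Set.subset_union_left
      | exact (atoms_snot _).trans Set.subset_union_right
      | simp [atoms]

lemma atoms_residual {ν : α → Option Bool} {φ : PForm α} {a : α}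
    (h : a ∈ atoms (residual ν φ)) : a ∈ atoms φ ∧ ν a = none := by
  induction φ with
  | tr => simp [residual, atoms] at h
  | fls => simp [residual, atoms] at h
  | atom b =>
      simp only [residual] at h
      rcases hb : ν b with _ | c
      · rw [hb] at h
        simp only [atoms, Set.mem_singleton_iff] at h
        subst h
        exact ⟨rfl, hb⟩
      · cases c <;> rw [hb] at h <;> simp [atoms] at h
  | neg φ ih => exact ih (atoms_snot _ h)
  | conj φ ψ ih1 ih2 =>
      rcases atoms_sand _ _ h with h' | h'
      · exact ⟨Or.inl (ih1 h').1, (ih1 h').2⟩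
      · exact ⟨Or.inr (ih2 h').1, (ih2 h').2⟩
  | disj φ ψ ih1 ih2 =>
      rcases atoms_sor _ _ h with h' | h'
      · exact ⟨Or.inl (ih1 h').1, (ih1 h').2⟩
      · exact ⟨Or.inr (ih2 h').1, (ih2 h').2⟩
  | impl φ ψ ih1 ih2 =>
      rcases atoms_simpImp _ _ h with h' | h'
      · exact ⟨Or.inl (ih1 h').1, (ih1 h').2⟩
      · exact ⟨Or.inr (ih2 h').1, (ih2 h').2⟩
  | biimp φ ψ ih1 ih2 =>
      rcases atoms_sIff _ _ h with h' | h'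
      · exact ⟨Or.inl (ih1 h').1, (ih1 h').2⟩
      · exact ⟨Or.inr (ih2 h').1, (ih2 h').2⟩

lemma kneg_some (x : Bool) : kneg (some x) = some (!x) := rfl

lemma kand_some (x y : Bool) : kand (some x) (some y) = some (x && y) := by
  cases x <;> cases y <;> rfl

lemma kor_some (x y : Bool) : kor (some x) (some y) = some (x || y) := by
  cases x <;> cases y <;> rfl

lemma kiff_some (x y : Bool) : kiff (some x) (some y) = some (x == y) := rfl

/-- If `μ` assigns every atom of `φ`, then its Kleene value is the classical
value under any total extension. -/
lemma keval_eq_eval {μ : α → Option Bool} {η : α → Bool} (hext : ExtendsT μ η)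
    {φ : PForm α} (h : ∀ a ∈ atoms φ, μ a ≠ none) :
    keval μ φ = some (eval η φ) := by
  induction φ with
  | tr => rfl
  | fls => rfl
  | atom a =>
      have ha := h a (by simp [atoms])
      rcases hm : μ a with _ | b
      · exact absurd hm ha
      · simp [keval, eval, hm, hext a b hm]
  | neg φ ih =>
      simp [keval, eval, ih (fun a haa => h a haa), kneg_some]
  | conj φ ψ ih1 ih2 =>
      have h1 := ih1 (fun a haa => h a (Or.inl haa))
      have h2 := ih2 (fun a haa => h a (Or.inr haa))
      simp [keval, eval, h1, h2, kand_some]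
  | disj φ ψ ih1 ih2 =>
      have h1 := ih1 (fun a haa => h a (Or.inl haa))
      have h2 := ih2 (fun a haa => h a (Or.inr haa))
      simp [keval, eval, h1, h2, kor_some]
  | impl φ ψ ih1 ih2 =>
      have h1 := ih1 (fun a haa => h a (Or.inl haa))
      have h2 := ih2 (fun a haa => h a (Or.inr haa))
      simp [keval, eval, h1, h2, kneg_some, kor_some]
  | biimp φ ψ ih1 ih2 =>
      have h1 := ih1 (fun a haa => h a (Or.inl haa))
      have h2 := ih2 (fun a haa => h a (Or.inr haa))
      simp [keval, eval, h1, h2, kiff_some]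

lemma eval_foldr_conj (η : α → Bool) (L : List (PForm α)) :
    eval η (L.foldr conj tr) = true ↔ ∀ x ∈ L, eval η x = true := by
  induction L with
  | nil => simp [eval]
  | cons x L ih => simp [eval, ih]

lemma atoms_foldr_conj {L : List (PForm α)} {a : α}
    (h : a ∈ atoms (L.foldr conj tr)) : ∃ x ∈ L, a ∈ atoms x := by
  induction L with
  | nil => simp [atoms] at h
  | cons x L ih =>
      rcases h with h | h
      · exact ⟨x, by simp, h⟩
      · obtain ⟨y, hy, hy'⟩ := ih h
        exact ⟨y, by simp [hy], hy'⟩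

end PForm

/-- Theorem 2, uniqueness of entailment: let `R` be any relation
between partial assignments and formulas such that (a) `R μ φ` implies that `μ`
entails `φ`; (b) for every assignment total on the atoms of `φ`, `R` holds iff
the assignment satisfies `φ`; (c) `R μ (φ₁ ∧ φ₂)` implies `R μ φ₁` and
`R μ φ₂`; (d) `R` is invariant under logical equivalence. Then `R μ φ` holds
iff `μ` entails `φ`. -/
theorem entailment_unique {α : Type} [Fintype α] [DecidableEq α]
    (R : (α → Option Bool) → PForm α → Prop)
    (ha : ∀ μ φ, R μ φ → Entails μ φ)
    (hb : ∀ (μ : α → Option Bool) (φ : PForm α),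
      (∀ a ∈ PForm.atoms φ, μ a ≠ none) →
      (R μ φ ↔ PForm.keval μ φ = some true))
    (hc : ∀ μ φ₁ φ₂, R μ (PForm.conj φ₁ φ₂) → R μ φ₁ ∧ R μ φ₂)
    (hd : ∀ (μ : α → Option Bool) (φ₁ φ₂ : PForm α),
      (∀ η : α → Bool, PForm.eval η φ₁ = PForm.eval η φ₂) →
      (R μ φ₁ ↔ R μ φ₂)) :
    ∀ (μ : α → Option Bool) (φ : PForm α), R μ φ ↔ Entails μ φ := by
  intro μ φ
  constructor
  · exact ha μ φ
  · intro hent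
    classical
    -- extend μ by δ on the unassigned atoms
    set ν : (α → Bool) → α → Option Bool :=
      fun δ a => if μ a = none then some (δ a) else none with hν
    set L : List (PForm α) :=
      (Finset.univ : Finset (α → Bool)).toList.map
        (fun δ => PForm.residual (ν δ) φ) with hL
    set ψ : PForm α := L.foldr PForm.conj PForm.tr with hψ
    -- any override of an extension-compatible base by ν δ extends μ
    have hov : ∀ (δ : α → Bool) (η : α → Bool), ExtendsT μ η →
        ExtendsT μ (PForm.ov (ν δ) η) := by
      intro δ η hext a b hab
      simp only [PForm.ov, hν, hab]
      simp [hext a b hab]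
    -- μ assigns every atom of ψ
    have hatoms : ∀ a ∈ PForm.atoms ψ, μ a ≠ none := by
      intro a haψ
      obtain ⟨x, hx, hax⟩ := PForm.atoms_foldr_conj haψ
      simp only [hL, List.mem_map] at hx
      obtain ⟨δ, _, rfl⟩ := hx
      have := (PForm.atoms_residual hax).2
      simp only [hν] at this
      by_contra hnone
      simp [hnone] at this
    -- a canonical total extension of μ
    have hext0 : ExtendsT μ (fun a => (μ a).getD true) := by
      intro a b hab; simp [hab]
    -- R μ ψ holds by (b)
    have hRψ : R μ ψ := by
      refine (hb μ ψ hatoms).mpr ?_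
      rw [PForm.keval_eq_eval hext0 hatoms]
      congr 1
      rw [PForm.eval_foldr_conj]
      intro x hx
      simp only [hL, List.mem_map] at hx
      obtain ⟨δ, _, rfl⟩ := hx
      rw [PForm.eval_residual]
      exact hent _ (hov δ _ hext0)
    -- conj φ ψ is equivalent to ψ
    have hequiv : ∀ η : α → Bool,
        PForm.eval η (PForm.conj φ ψ) = PForm.eval η ψ := by
      intro η
      simp only [PForm.eval]
      cases hψη : PForm.eval η ψ
      · simp
      · simp only [Bool.and_true]
        have hmem : PForm.residual (ν η) φ ∈ L := by
          simp only [hL, List.mem_map]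
          exact ⟨η, by simp [Finset.mem_toList], rfl⟩
        have := (PForm.eval_foldr_conj η L).mp hψη _ hmem
        rw [PForm.eval_residual] at this
        have hoveq : PForm.ov (ν η) η = η := by
          funext a
          simp only [PForm.ov, hν]
          by_cases h : μ a = none <;> simp [h]
        rwa [hoveq] at this
    have hRconj : R μ (PForm.conj φ ψ) := (hd μ _ _ hequiv).mpr hRψ
    exact (hc μ φ ψ hRconj).1
end

section
/- (Theorem 3) Let ψ be a propositional formula over the disjoint union of atom sets A and B, with B finite, and let μ be a partial truth assignment on A. Then μ validates ∃B.ψ — i.e. there exists a total assignment δ on B such that the residual ψ|(μ ∪ δ) equals the constant ⊤ — if and only if μ validates the Shannon expansion of ψ with respect to B, i.e. the residual of the Shannon expansion under μ equals ⊤. -/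
namespace PForm

variable {α : Type}

lemma kand_tl (x : Option Bool) : kand (some true) x = x := by
  rcases x with _ | (_ | _) <;> rfl
lemma kand_fl (x : Option Bool) : kand (some false) x = some false := by
  rcases x with _ | (_ | _) <;> rfl
lemma kand_tr (x : Option Bool) : kand x (some true) = x := by
  rcases x with _ | (_ | _) <;> rfl
lemma kand_fr (x : Option Bool) : kand x (some false) = some false := by
  rcases x with _ | (_ | _) <;> rfl
lemma kor_tl (x : Option Bool) : kor (some true) x = some true := by
  rcases x with _ | (_ | _) <;> rfl
lemma kor_fl (x : Option Bool) : kor (some false) x = x := by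
  rcases x with _ | (_ | _) <;> rfl
lemma kor_tr (x : Option Bool) : kor x (some true) = some true := by
  rcases x with _ | (_ | _) <;> rfl
lemma kor_fr (x : Option Bool) : kor x (some false) = x := by
  rcases x with _ | (_ | _) <;> rfl
lemma kiff_tl (x : Option Bool) : kiff (some true) x = x := by
  rcases x with _ | (_ | _) <;> rfl
lemma kiff_fl (x : Option Bool) : kiff (some false) x = kneg x := by
  rcases x with _ | (_ | _) <;> rfl
lemma kiff_tr (x : Option Bool) : kiff x (some true) = x := by
  rcases x with _ | (_ | _) <;> rfl
lemma kiff_fr (x : Option Bool) : kiff x (some false) = kneg x := by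
  rcases x with _ | (_ | _) <;> rfl

lemma keval_snot (ν : α → Option Bool) (p : PForm α) :
    keval ν (snot p) = kneg (keval ν p) := by
  cases p <;> rfl

lemma keval_sand (ν : α → Option Bool) (p q : PForm α) :
    keval ν (sand p q) = kand (keval ν p) (keval ν q) := by
  cases p <;> cases q <;>
    simp [sand, keval, kand_tl, kand_fl, kand_tr, kand_fr]

lemma keval_sor (ν : α → Option Bool) (p q : PForm α) :
    keval ν (sor p q) = kor (keval ν p) (keval ν q) := by
  cases p <;> cases q <;>
    simp [sor, keval, kor_tl, kor_fl, kor_tr, kor_fr]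

lemma keval_simpImp (ν : α → Option Bool) (p q : PForm α) :
    keval ν (simpImp p q) = kor (kneg (keval ν p)) (keval ν q) := by
  cases p <;> cases q <;>
    simp [simpImp, keval, snot, kneg, kor_tl, kor_fl, kor_tr, kor_fr]

lemma keval_sIff (ν : α → Option Bool) (p q : PForm α) :
    keval ν (sIff p q) = kiff (keval ν p) (keval ν q) := by
  cases p <;> cases q <;>
    simp [sIff, keval, snot, kneg, kiff_tl, kiff_fl, kiff_tr, kiff_fr]

/-- Extend a partial assignment `μ` by a fallback partial assignment `ν`. -/
def pext (μ ν : α → Option Bool) : α → Option Bool :=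
  fun a => match μ a with | some b => some b | none => ν a

lemma keval_residual (μ ν : α → Option Bool) (φ : PForm α) :
    keval ν (residual μ φ) = keval (pext μ ν) φ := by
  induction φ with
  | tr => rfl
  | fls => rfl
  | atom a =>
    rcases h : μ a with _ | b
    · simp [residual, keval, pext, h]
    · cases b <;> simp [residual, keval, pext, h]
  | neg p ih => simp [residual, keval, keval_snot, ih]
  | conj p q ih1 ih2 => simp [residual, keval, keval_sand, ih1, ih2]
  | disj p q ih1 ih2 => simp [residual, keval, keval_sor, ih1, ih2]
  | impl p q ih1 ih2 => simp [residual, keval, keval_simpImp, ih1, ih2]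
  | biimp p q ih1 ih2 => simp [residual, keval, keval_sIff, ih1, ih2]

lemma kand_eq_true {x y : Option Bool} :
    kand x y = some true ↔ x = some true ∧ y = some true := by
  rcases x with _ | (_ | _) <;> rcases y with _ | (_ | _) <;> simp [kand]
lemma kand_eq_false {x y : Option Bool} :
    kand x y = some false ↔ x = some false ∨ y = some false := by
  rcases x with _ | (_ | _) <;> rcases y with _ | (_ | _) <;> simp [kand]
lemma kor_eq_true {x y : Option Bool} :
    kor x y = some true ↔ x = some true ∨ y = some true := by
  rcases x with _ | (_ | _) <;> rcases y with _ | (_ | _) <;> simp [kor]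
lemma kor_eq_false {x y : Option Bool} :
    kor x y = some false ↔ x = some false ∧ y = some false := by
  rcases x with _ | (_ | _) <;> rcases y with _ | (_ | _) <;> simp [kor]
lemma kneg_eq_true {x : Option Bool} : kneg x = some true ↔ x = some false := by
  rcases x with _ | (_ | _) <;> simp [kneg]
lemma kneg_eq_false {x : Option Bool} : kneg x = some false ↔ x = some true := by
  rcases x with _ | (_ | _) <;> simp [kneg]

lemma residual_of_keval (μ : α → Option Bool) (φ : PForm α) :
    (keval μ φ = some true → residual μ φ = tr) ∧
    (keval μ φ = some false → residual μ φ = fls) := by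
  induction φ with
  | tr => simp [keval, residual]
  | fls => simp [keval, residual]
  | atom a =>
    rcases h : μ a with _ | (_ | _) <;> simp [keval, residual, h]
  | neg p ih =>
    simp only [keval, residual, kneg_eq_true, kneg_eq_false]
    exact ⟨fun h => by rw [ih.2 h]; rfl, fun h => by rw [ih.1 h]; rfl⟩
  | conj p q ih1 ih2 =>
    simp only [keval, residual, kand_eq_true, kand_eq_false]
    constructor
    · rintro ⟨h1, h2⟩; rw [ih1.1 h1, ih2.1 h2]; rfl
    · rintro (h | h)
      · rw [ih1.2 h]; cases residual μ q <;> rfl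
      · rw [ih2.2 h]; cases residual μ p <;> rfl
  | disj p q ih1 ih2 =>
    simp only [keval, residual, kor_eq_true, kor_eq_false]
    constructor
    · rintro (h | h)
      · rw [ih1.1 h]; cases residual μ q <;> rfl
      · rw [ih2.1 h]; cases residual μ p <;> rfl
    · rintro ⟨h1, h2⟩; rw [ih1.2 h1, ih2.2 h2]; rfl
  | impl p q ih1 ih2 =>
    simp only [keval, residual, kor_eq_true, kor_eq_false, kneg_eq_true, kneg_eq_false]
    constructor
    · rintro (h | h)
      · rw [ih1.2 h]; cases residual μ q <;> rfl
      · rw [ih2.1 h]; cases residual μ p <;> rfl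
    · rintro ⟨h1, h2⟩; rw [ih1.1 h1, ih2.2 h2]; rfl
  | biimp p q ih1 ih2 =>
    constructor <;> intro h <;>
    · simp only [keval] at h
      rcases h1 : keval μ p with _ | (_ | _) <;> rcases h2 : keval μ q with _ | (_ | _) <;>
        simp [h1, h2, kiff] at h <;>
        simp [residual, sIff, snot, ih1.1, ih1.2, ih2.1, ih2.2, h1, h2]

theorem residual_eq_tr_iff (μ : α → Option Bool) (φ : PForm α) :
    residual μ φ = tr ↔ keval μ φ = some true := by
  constructor
  · intro h
    have := keval_residual μ μ φ
    rw [h] at this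
    have hpe : pext μ μ = μ := by
      funext a; rcases ha : μ a with _ | b <;> simp [pext, ha]
    rw [hpe] at this
    exact this.symm
  · exact (residual_of_keval μ φ).1

lemma keval_foldr_disj (ν : α → Option Bool) (L : List (PForm α)) :
    keval ν (L.foldr disj fls) = some true ↔ ∃ φ ∈ L, keval ν φ = some true := by
  induction L with
  | nil => simp [keval]
  | cons a L ih => simp [keval, kor_eq_true, ih]

end PForm

lemma pcombine_eq_pext {A B : Type} (μ : A → Option Bool) (δ : B → Bool) :
    pcombine μ δ = PForm.pext (liftB δ) (liftA μ) := by
  funext x; cases x <;> rfl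

/-- Theorem 3: for a formula `ψ` over `A ⊕ B` (`B` finite) and
a partial assignment `μ` on `A`: `μ` validates `∃B.ψ` — there is a total
assignment `δ` on `B` with `ψ|(μ ∪ δ) = ⊤` — iff `μ` validates the Shannon
expansion of `ψ` w.r.t. `B`, i.e. the residual of the Shannon expansion under
`μ` equals `⊤`. -/
theorem validates_exists_iff_validates_shannon {A B : Type} [Fintype B] [DecidableEq B]
    (ψ : PForm (A ⊕ B)) (μ : A → Option Bool) :
    (∃ δ : B → Bool, PForm.residual (pcombine μ δ) ψ = PForm.tr) ↔
    PForm.residual (liftA μ) (shannon ψ) = PForm.tr := by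
  have key : ∀ δ : B → Bool,
      PForm.keval (liftA μ) (PForm.residual (liftB δ) ψ) = PForm.keval (pcombine μ δ) ψ := by
    intro δ
    rw [PForm.keval_residual, pcombine_eq_pext]
  rw [PForm.residual_eq_tr_iff, shannon, PForm.keval_foldr_disj]
  constructor
  · rintro ⟨δ, hδ⟩
    refine ⟨PForm.residual (liftB δ) ψ, ?_, ?_⟩
    · simp only [List.mem_map]
      exact ⟨δ, by simp [Finset.mem_toList], rfl⟩
    · rw [key δ, ← PForm.residual_eq_tr_iff]; exact hδ
  · rintro ⟨φ, hmem, hφ⟩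
    simp only [List.mem_map] at hmem
    obtain ⟨δ, -, rfl⟩ := hmem
    refine ⟨δ, ?_⟩
    rw [PForm.residual_eq_tr_iff, ← key δ]; exact hφ
end

section
/- (Theorem 6, converse fails for Tseitin CNF-ization) There exist a non-CNF formula φ over atoms A = {A₁, A₂}, a CNF formula ψ over A ∪ B (B = {B₁, B₂}) which is the Tseitin CNF-ization of φ (so that φ is equivalent to ∃B.ψ), and a partial truth assignment μ on A such that μ entails ∃B.ψ but μ does not validate ∃B.ψ. Concretely, for φ = (A₁ ∧ A₂) ∨ (A₁ ∧ ¬A₂), its Tseitin encoding ψ = (B₁ ∨ B₂) ∧ (¬B₁ ∨ A₁) ∧ (¬B₁ ∨ A₂) ∧ (B₁ ∨ ¬A₁ ∨ ¬A₂) ∧ (¬B₂ ∨ A₁) ∧ (¬B₂ ∨ ¬A₂) ∧ (B₂ ∨ ¬A₁ ∨ A₂), and μ assigning true to A₁ only: (1) for every total assignment η on A, η ⊨ φ iff there exists a total assignment δ on B with η ∪ δ ⊨ ψ; (2) every total assignment η on A extending μ admits a total assignment δ on B with η ∪ δ ⊨ ψ; and (3) there is no total assignment δ on B with ψ|(μ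 ∪ δ) = ⊤. -/
deriving instance DecidableEq for PForm

instance {n} (μ : Fin n → Option Bool) (η : Fin n → Bool) :
    Decidable (∀ a b, μ a = some b → η a = b) := inferInstance

/-- The non-CNF formula `φ = (A₁ ∧ A₂) ∨ (A₁ ∧ ¬A₂)` over `A = {A₁, A₂}`. -/
def phiEx : PForm (Fin 2) :=
  PForm.disj (PForm.conj (PForm.atom 0) (PForm.atom 1))
             (PForm.conj (PForm.atom 0) (PForm.neg (PForm.atom 1)))

/-- The Tseitin CNF-ization `ψ` of `φ`, where `B₁ = inr 0` labels `A₁ ∧ A₂`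
and `B₂ = inr 1` labels `A₁ ∧ ¬A₂`:
`ψ = (B₁ ∨ B₂) ∧ (¬B₁ ∨ A₁) ∧ (¬B₁ ∨ A₂) ∧ (B₁ ∨ ¬A₁ ∨ ¬A₂) ∧
     (¬B₂ ∨ A₁) ∧ (¬B₂ ∨ ¬A₂) ∧ (B₂ ∨ ¬A₁ ∨ A₂)`. -/
def psiEx : PForm (Fin 2 ⊕ Fin 2) :=
  PForm.cnfForm
    [ [(Sum.inr 0, true), (Sum.inr 1, true)],
      [(Sum.inr 0, false), (Sum.inl 0, true)],
      [(Sum.inr 0, false), (Sum.inl 1, true)],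
      [(Sum.inr 0, true), (Sum.inl 0, false), (Sum.inl 1, false)],
      [(Sum.inr 1, false), (Sum.inl 0, true)],
      [(Sum.inr 1, false), (Sum.inl 1, false)],
      [(Sum.inr 1, true), (Sum.inl 0, false), (Sum.inl 1, true)] ]

/-- The partial assignment on `A` assigning true to `A₁` only. -/
def muEx : Fin 2 → Option Bool := fun a => if a = 0 then some true else none

instance {n} (μ : Fin n → Option Bool) (η : Fin n → Bool) : Decidable (ExtendsT μ η) := by
  unfold ExtendsT; infer_instance

/-- Theorem 6, converse fails for Tseitin CNF-ization:
(1) `φ` is equivalent to `∃B.ψ`: for every total assignment `η` on `A`,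
`η ⊨ φ` iff there is a total assignment `δ` on `B` with `η ∪ δ ⊨ ψ`;
(2) `μ = {A₁ ↦ true}` entails `∃B.ψ`: every total assignment `η` on `A`
extending `μ` admits a total `δ` on `B` with `η ∪ δ ⊨ ψ`;
(3) `μ` does not validate `∃B.ψ`: there is no total assignment `δ` on `B`
with `ψ|(μ ∪ δ) = ⊤`. -/
theorem tseitin_entails_not_validates :
    (∀ η : Fin 2 → Bool, PForm.eval η phiEx = true ↔
      ∃ δ : Fin 2 → Bool, PForm.eval (combine η δ) psiEx = true) ∧
    (∀ η : Fin 2 → Bool, ExtendsT muEx η →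
      ∃ δ : Fin 2 → Bool, PForm.eval (combine η δ) psiEx = true) ∧
    ¬ (∃ δ : Fin 2 → Bool, PForm.residual (pcombine muEx δ) psiEx = PForm.tr) := by
  refine ⟨?_, ?_, ?_⟩ <;> decide
end
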